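/- For any vectors Z, W ∈ ℝⁿ and any finite collection X of vectors in ℝⁿ, the residual-variance identity σ²_{z·x} · σ²_{w·zx} = σ²_{w·x} · σ²_{z·wx} holds, where σ²_{w·zx} uses the projection onto span(Z, X) and σ²_{z·wx} uses the projection onto span(W, X). -/

import Mathlib

open scoped BigOperators

/-- Weighted inner product on ℝⁿ: `(A,B) := (∑ i, wᵢ Aᵢ Bᵢ) / (∑ i, wᵢ)`. -/
noncomputable def wip {n : ℕ} (w A B : Fin n → ℝ) : ℝ :=
  (∑ i, w i * A i * B i) / (∑ i, w i)

/-- `P` is the best linear predictor (orthogonal projection with respect to the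
weighted inner product `wip w`) of `A` onto the span of the collection `C`. -/
def IsBlp {n : ℕ} (w : Fin n → ℝ) (C : Set (Fin n → ℝ)) (A P : Fin n → ℝ) : Prop :=
  P ∈ Submodule.span ℝ C ∧ ∀ v ∈ Submodule.span ℝ C, wip w (A - P) v = 0

lemma wip_comm {n : ℕ} (w A B : Fin n → ℝ) : wip w A B = wip w B A := by
  unfold wip
  congr 1
  exact Finset.sum_congr rfl (fun i _ => by ring)

lemma wip_add_left {n : ℕ} (w A B C : Fin n → ℝ) :
    wip w (A + B) C = wip w A C + wip w B C := by
  unfold wip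
  rw [← add_div, ← Finset.sum_add_distrib]
  congr 1
  exact Finset.sum_congr rfl (fun i _ => by simp [Pi.add_apply]; ring)

lemma wip_sub_left {n : ℕ} (w A B C : Fin n → ℝ) :
    wip w (A - B) C = wip w A C - wip w B C := by
  unfold wip
  rw [← sub_div, ← Finset.sum_sub_distrib]
  congr 1
  exact Finset.sum_congr rfl (fun i _ => by simp [Pi.sub_apply]; ring)

lemma wip_smul_left {n : ℕ} (c : ℝ) (w A B : Fin n → ℝ) :
    wip w (c • A) B = c * wip w A B := by
  unfold wip
  have h : ∑ i, w i * (c • A) i * B i = c * ∑ i, w i * A i * B i := by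
    rw [Finset.mul_sum]
    exact Finset.sum_congr rfl (fun i _ => by simp [Pi.smul_apply]; ring)
  rw [h, mul_div_assoc]

lemma wip_add_right {n : ℕ} (w A B C : Fin n → ℝ) :
    wip w A (B + C) = wip w A B + wip w A C := by
  rw [wip_comm, wip_add_left, wip_comm w B, wip_comm w C]

lemma wip_sub_right {n : ℕ} (w A B C : Fin n → ℝ) :
    wip w A (B - C) = wip w A B - wip w A C := by
  rw [wip_comm, wip_sub_left, wip_comm w B, wip_comm w C]

lemma wip_smul_right {n : ℕ} (c : ℝ) (w A B : Fin n → ℝ) :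
    wip w A (c • B) = c * wip w A B := by
  rw [wip_comm, wip_smul_left, wip_comm]

lemma wip_zero_right {n : ℕ} (w A : Fin n → ℝ) : wip w A 0 = 0 := by
  unfold wip
  simp

lemma wip_self_eq_zero {n : ℕ} {w : Fin n → ℝ} (hw : ∀ i, 0 < w i) {v : Fin n → ℝ}
    (h : wip w v v = 0) : v = 0 := by
  rcases Nat.eq_zero_or_pos n with h0 | h0
  · subst h0; funext i; exact i.elim0
  · have hne : (Finset.univ : Finset (Fin n)).Nonempty := by
      exact Finset.univ_nonempty_iff.mpr (Fin.pos_iff_nonempty.mp h0)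
    have hTw : 0 < ∑ i, w i := Finset.sum_pos (fun i _ => hw i) hne
    have hnum : ∑ i, w i * v i * v i = 0 := by
      unfold wip at h
      rcases div_eq_zero_iff.mp h with h | h
      · exact h
      · exact absurd h (ne_of_gt hTw)
    have hzero : ∀ i ∈ Finset.univ, w i * v i * v i = 0 :=
      (Finset.sum_eq_zero_iff_of_nonneg
        (fun i _ => by nlinarith [hw i, sq_nonneg (v i)])).mp hnum
    funext i
    have h1 := hzero i (Finset.mem_univ i)
    have h2 := hw i
    have : v i = 0 := by
      rcases mul_eq_zero.mp h1 with h | h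
      · rcases mul_eq_zero.mp h with h | h
        · exact absurd h h2.ne'
        · exact h
      · exact h
    simpa using this

lemma blp_unique {n : ℕ} {w : Fin n → ℝ} (hw : ∀ i, 0 < w i) {C : Set (Fin n → ℝ)}
    {A P P' : Fin n → ℝ} (h : IsBlp w C A P) (h' : IsBlp w C A P') : P = P' := by
  have hd : P - P' ∈ Submodule.span ℝ C := Submodule.sub_mem _ h.1 h'.1
  have e1 := h.2 _ hd
  have e2 := h'.2 _ hd
  have h1 : wip w (P - P') (P - P') = 0 := by
    have hx : (A - P') - (A - P) = P - P' := by ring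
    have : wip w ((A - P') - (A - P)) (P - P') = 0 := by
      rw [wip_sub_left, e1, e2]; ring
    rwa [hx] at this
  have := wip_self_eq_zero hw h1
  have : P - P' = 0 := this
  exact sub_eq_zero.mp this

lemma wip_expand {n : ℕ} (w e f : Fin n → ℝ) (c : ℝ) :
    wip w (f - c • e) (f - c • e)
      = wip w f f - 2 * c * wip w f e + c ^ 2 * wip w e e := by
  rw [wip_sub_left, wip_sub_right, wip_sub_right, wip_smul_left, wip_smul_left,
    wip_smul_right, wip_smul_right, wip_comm w e f]
  ring

/-- Key computation: if the residual of `Z` on `span X` has nonzero norm, then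
`σ²_{z·x} · σ²_{w·zx} = σ²_{z·x} · σ²_{w·x} − ⟨e_w, e_z⟩²`. -/
lemma key {n : ℕ} {w : Fin n → ℝ} (hw : ∀ i, 0 < w i)
    {X : Set (Fin n → ℝ)} {Z W Pzx Pwx Pwzx : Fin n → ℝ}
    (hPzx : IsBlp w X Z Pzx) (hPwx : IsBlp w X W Pwx)
    (hPwzx : IsBlp w (insert Z X) W Pwzx)
    (hs : wip w (Z - Pzx) (Z - Pzx) ≠ 0) :
    wip w (Z - Pzx) (Z - Pzx) * wip w (W - Pwzx) (W - Pwzx)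
      = wip w (Z - Pzx) (Z - Pzx) * wip w (W - Pwx) (W - Pwx)
        - (wip w (W - Pwx) (Z - Pzx))^2 := by
  set ez : Fin n → ℝ := Z - Pzx with hez_def
  set ew : Fin n → ℝ := W - Pwx with hew_def
  set s : ℝ := wip w ez ez with hs_def
  set c : ℝ := wip w ew ez / s with hc_def
  have hXle : Submodule.span ℝ X ≤ Submodule.span ℝ (insert Z X) :=
    Submodule.span_mono (Set.subset_insert _ _)
  have hZmem : Z ∈ Submodule.span ℝ (insert Z X) :=
    Submodule.subset_span (Set.mem_insert _ _)
  have hez_mem : ez ∈ Submodule.span ℝ (insert Z X) :=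
    Submodule.sub_mem _ hZmem (hXle hPzx.1)
  have hres : W - (Pwx + c • ez) = ew - c • ez := by
    rw [hew_def]; ring
  have horthoX : ∀ u ∈ Submodule.span ℝ X, wip w (ew - c • ez) u = 0 := by
    intro u hu
    rw [wip_sub_left, wip_smul_left, hPwx.2 u hu, hPzx.2 u hu]; ring
  have hP' : IsBlp w (insert Z X) W (Pwx + c • ez) := by
    constructor
    · exact Submodule.add_mem _ (hXle hPwx.1) (Submodule.smul_mem _ _ hez_mem)
    · intro v hv
      rw [hres]
      induction hv using Submodule.span_induction with
      | mem x hx =>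
        rw [Set.mem_insert_iff] at hx
        rcases hx with rfl | hx
        · have hZeq : x = ez + Pzx := by rw [hez_def]; ring
          rw [hZeq, wip_add_right, horthoX Pzx hPzx.1,
            wip_sub_left, wip_smul_left]
          rw [hc_def]
          field_simp
          rw [← hs_def]; ring
        · exact horthoX x (Submodule.subset_span hx)
      | zero => exact wip_zero_right w _
      | add x y hx hy ihx ihy => rw [wip_add_right, ihx, ihy]; ring
      | smul a x hx ih => rw [wip_smul_right, ih]; ring
  have hPeq : Pwzx = Pwx + c • ez := blp_unique hw hPwzx hP'
  have hE := wip_expand w ez ew c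
  rw [hPeq, hres, hE, hc_def]
  field_simp
  ring

/-- Degenerate case: if the residual of `Z` on `span X` vanishes, then so does
the residual of `Z` on any larger span. -/
lemma deg {n : ℕ} {w : Fin n → ℝ} (hw : ∀ i, 0 < w i)
    {X : Set (Fin n → ℝ)} {Z W Pzx Pzwx : Fin n → ℝ}
    (hPzx : IsBlp w X Z Pzx)
    (hPzwx : IsBlp w (insert W X) Z Pzwx)
    (hs : wip w (Z - Pzx) (Z - Pzx) = 0) :
    wip w (Z - Pzwx) (Z - Pzwx) = 0 := by
  have hez : Z - Pzx = 0 := wip_self_eq_zero hw hs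
  have hZP : Z = Pzx := sub_eq_zero.mp hez
  have hZ : Z ∈ Submodule.span ℝ (insert W X) := by
    rw [hZP]
    exact Submodule.span_mono (Set.subset_insert _ _) hPzx.1
  exact hPzwx.2 _ (Submodule.sub_mem _ hZ hPzwx.1)

/-- for any vectors `Z, W ∈ ℝⁿ` and any finite collection `X` of
vectors in ℝⁿ, the residual-variance identity
`σ²_{z·x} · σ²_{w·zx} = σ²_{w·x} · σ²_{z·wx}` holds. -/
theorem stmt2 {n : ℕ} (w : Fin n → ℝ) (hw : ∀ i, 0 < w i)
    (X : Set (Fin n → ℝ)) (hXfin : X.Finite)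
    (Z W : Fin n → ℝ)
    (Pzx Pwx Pwzx Pzwx : Fin n → ℝ)
    (hPzx : IsBlp w X Z Pzx)
    (hPwx : IsBlp w X W Pwx)
    (hPwzx : IsBlp w (insert Z X) W Pwzx)
    (hPzwx : IsBlp w (insert W X) Z Pzwx) :
    wip w (Z - Pzx) (Z - Pzx) * wip w (W - Pwzx) (W - Pwzx)
      = wip w (W - Pwx) (W - Pwx) * wip w (Z - Pzwx) (Z - Pzwx) := by
  by_cases hz : wip w (Z - Pzx) (Z - Pzx) = 0
  · rw [hz, deg hw hPzx hPzwx hz]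
    ring
  · by_cases hwv : wip w (W - Pwx) (W - Pwx) = 0
    · rw [hwv, deg hw hPwx hPwzx hwv]
      ring
    · have h1 := key hw hPzx hPwx hPwzx hz
      have h2 := key hw hPwx hPzx hPzwx hwv
      rw [wip_comm w (Z - Pzx) (W - Pwx)] at h2
      linarith
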